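/- With m, x_k, ξ_k as above, define μ = m(t)dt - ∑_k δ_{ξ_k}, f_μ(x) = μ((0, x]) (with sign convention for x < 0), and F_μ(x) = ∫_0^x f_μ(t) dt. Then f_μ(x_k) = 0 and F_μ(x_k) = 0 for all k, and both f_μ and F_μ are bounded on ℝ. -/

import Mathlib

open MeasureTheory intervalIntegral

lemma aux_intInt (m : ℝ → ℝ) (C : ℝ) (hm : Measurable m) (hb : ∀ t, |m t| ≤ C) (a b : ℝ) :
    IntervalIntegrable m volume a b := by
  rw [intervalIntegrable_iff]
  have hC : IntegrableOn (fun _ : ℝ => C) (Set.uIoc a b) volume :=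
    integrableOn_const measure_Ioc_lt_top.ne
  refine hC.mono' hm.aestronglyMeasurable.restrict ?_
  filter_upwards with t using by simpa using hb t

lemma aux_vol (ξ a b : ℝ) (ha : a ≤ ξ) (hξb : ξ ≤ b) :
    volume (Set.Ioc a b ∩ Set.Ici ξ) = ENNReal.ofReal (b - ξ) := by
  apply le_antisymm
  · calc volume (Set.Ioc a b ∩ Set.Ici ξ) ≤ volume (Set.Icc ξ b) := by
          apply measure_mono; rintro t ⟨⟨_, h2⟩, h3⟩; exact ⟨h3, h2⟩
      _ = ENNReal.ofReal (b - ξ) := Real.volume_Icc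
  · calc ENNReal.ofReal (b - ξ) = volume (Set.Ioc ξ b) := Real.volume_Ioc.symm
      _ ≤ volume (Set.Ioc a b ∩ Set.Ici ξ) := by
          apply measure_mono; rintro t ⟨h1, h2⟩; exact ⟨⟨lt_of_le_of_lt ha h1, h2⟩, h1.le⟩

lemma aux_step (ξ a b : ℝ) (ha : a ≤ ξ) (hξb : ξ ≤ b) :
    ∫ t in a..b, (if ξ ≤ t then (1:ℝ) else 0) = b - ξ := by
  have hab : a ≤ b := ha.trans hξb
  have h1 : (fun t => if ξ ≤ t then (1:ℝ) else 0) = Set.indicator (Set.Ici ξ) (fun _ => (1:ℝ)) := by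
    ext t; simp [Set.indicator_apply]
  rw [intervalIntegral.integral_of_le hab, h1, setIntegral_indicator measurableSet_Ici,
    setIntegral_const, measureReal_def, aux_vol ξ a b ha hξb, smul_eq_mul, mul_one,
    ENNReal.toReal_ofReal (by linarith)]

lemma aux_fub (m : ℝ → ℝ) (C : ℝ) (hm : Measurable m) (h0 : ∀ t, 0 ≤ m t) (hub : ∀ t, m t ≤ C)
    (a b : ℝ) (hab : a ≤ b) :
    ∫ t in a..b, (∫ u in a..t, m u) = ∫ u in a..b, (b - u) * m u := by
  set μ := volume.restrict (Set.Ioc a b) with hμ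
  have hfin : IsFiniteMeasure μ := by
    constructor; rw [hμ, Measure.restrict_apply_univ]; exact measure_Ioc_lt_top
  set f : ℝ → ℝ → ℝ := fun t u => if u ≤ t then m u else 0 with hfdef
  have hmeas : Measurable (Function.uncurry f) := by
    have : Function.uncurry f = fun p : ℝ × ℝ =>
        Set.indicator {p : ℝ × ℝ | p.2 ≤ p.1} (fun p => m p.2) p := by
      ext p; simp [Function.uncurry, hfdef, Set.indicator_apply]
    rw [this]
    exact (hm.comp measurable_snd).indicator (measurableSet_le measurable_snd measurable_fst)
  have hint : Integrable (Function.uncurry f) (μ.prod μ) := by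
    have hC : Integrable (fun _ : ℝ × ℝ => C) (μ.prod μ) := integrable_const C
    refine hC.mono' hmeas.aestronglyMeasurable ?_
    filter_upwards with p
    simp only [Function.uncurry, hfdef]
    split_ifs with h
    · rw [Real.norm_eq_abs, abs_of_nonneg (h0 p.2)]; exact hub p.2
    · rw [norm_zero]; exact le_trans (h0 p.2) (hub p.2)
  have swap := integral_integral_swap hint
  rw [hμ] at swap
  have hL : ∫ t in Set.Ioc a b, (∫ u in Set.Ioc a b, f t u) =
      ∫ t in Set.Ioc a b, (∫ u in a..t, m u) := by
    refine setIntegral_congr_fun measurableSet_Ioc (fun t ht => ?_)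
    have h1 : (fun u => if u ≤ t then m u else 0) = Set.indicator (Set.Iic t) m := by
      ext u; simp [Set.indicator_apply]
    simp only [hfdef]
    rw [h1, setIntegral_indicator measurableSet_Iic, Set.Ioc_inter_Iic,
      min_eq_right ht.2, intervalIntegral.integral_of_le ht.1.le]
  have hR : ∫ u in Set.Ioc a b, (∫ t in Set.Ioc a b, f t u) =
      ∫ u in Set.Ioc a b, (b - u) * m u := by
    refine setIntegral_congr_fun measurableSet_Ioc (fun u hu => ?_)
    have h1 : (fun t => if u ≤ t then m u else 0) = Set.indicator (Set.Ici u) (fun _ => m u) := by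
      ext t; simp [Set.indicator_apply]
    simp only [hfdef]
    rw [h1, setIntegral_indicator measurableSet_Ici, setIntegral_const,
      measureReal_def, aux_vol u a b hu.1.le hu.2, smul_eq_mul, ENNReal.toReal_ofReal (by linarith [hu.2])]
  rw [intervalIntegral.integral_of_le hab, intervalIntegral.integral_of_le hab, ← hL, ← hR]
  exact swap


lemma aux_intInt_tm (m : ℝ → ℝ) (C : ℝ) (hm : Measurable m) (h0 : ∀ t, 0 ≤ m t)
    (hub : ∀ t, m t ≤ C) (a b : ℝ) :
    IntervalIntegrable (fun t => t * m t) volume a b := by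
  rw [intervalIntegrable_iff]
  have hCnn : 0 ≤ C := (h0 0).trans (hub 0)
  have hC : IntegrableOn (fun _ : ℝ => (|a| + |b|) * C) (Set.uIoc a b) volume :=
    integrableOn_const measure_Ioc_lt_top.ne
  refine hC.mono' ((measurable_id.mul hm).aestronglyMeasurable.restrict) ?_
  filter_upwards [ae_restrict_mem measurableSet_uIoc] with t ht
  have habs : |t| ≤ |a| + |b| := by
    rw [Set.mem_uIoc] at ht
    rw [abs_le]
    rcases ht with ⟨h1, h2⟩ | ⟨h1, h2⟩ <;>
      constructor <;>
      nlinarith [le_abs_self a, le_abs_self b, neg_abs_le a, neg_abs_le b]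
  have : ‖t * m t‖ = |t| * |m t| := by rw [Real.norm_eq_abs, abs_mul]
  rw [this]
  exact mul_le_mul habs (by rw [abs_of_nonneg (h0 t)]; exact hub t) (abs_nonneg _)
    (by positivity)

lemma aux_ximem (m : ℝ → ℝ) (c C : ℝ) (hc : 0 < c) (hm : Measurable m)
    (hlb : ∀ t, c ≤ m t) (hub : ∀ t, m t ≤ C) (a b : ℝ) (hab : a < b)
    (hmass : ∫ t in a..b, m t = 1) :
    a < (∫ t in a..b, t * m t) ∧ (∫ t in a..b, t * m t) < b := by
  have h0 : ∀ t, 0 ≤ m t := fun t => hc.le.trans (hlb t)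
  have habs : ∀ t, |m t| ≤ C := fun t => by rw [abs_of_nonneg (h0 t)]; exact hub t
  have hint_m : IntervalIntegrable m volume a b := aux_intInt m C hm habs a b
  have hint_tm : IntervalIntegrable (fun t => t * m t) volume a b :=
    aux_intInt_tm m C hm h0 hub a b
  have hid : ∫ t in a..b, (t - a) = (b - a) ^ 2 / 2 := by
    rw [integral_sub intervalIntegrable_id intervalIntegrable_const, integral_id,
      intervalIntegral.integral_const]
    simp; ring
  have hid' : ∫ t in a..b, (b - t) = (b - a) ^ 2 / 2 := by
    rw [integral_sub intervalIntegrable_const intervalIntegrable_id, integral_id,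
      intervalIntegral.integral_const]
    simp; ring
  have hpos : 0 < c * ((b - a) ^ 2 / 2) := by
    have : 0 < b - a := sub_pos.2 hab
    positivity
  constructor
  · have e1 : ∫ t in a..b, (t - a) * m t = (∫ t in a..b, t * m t) - a := by
      have hfun : (fun t => (t - a) * m t) = (fun t => t * m t - a * m t) := by ext t; ring
      rw [hfun, integral_sub hint_tm (hint_m.const_mul a), intervalIntegral.integral_const_mul, hmass, mul_one]
    have e2 : ∫ t in a..b, c * (t - a) ≤ ∫ t in a..b, (t - a) * m t := by
      apply integral_mono_on hab.le
        ((continuous_const.mul (continuous_id.sub continuous_const)).intervalIntegrable _ _)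
        (by
          have hfun : (fun t => (t - a) * m t) = (fun t => t * m t - a * m t) := by ext t; ring
          rw [hfun]; exact hint_tm.sub (hint_m.const_mul a))
      intro t ht
      have h1 : 0 ≤ t - a := sub_nonneg.2 ht.1
      calc c * (t - a) = (t - a) * c := by ring
        _ ≤ (t - a) * m t := mul_le_mul_of_nonneg_left (hlb t) h1
    rw [intervalIntegral.integral_const_mul, hid] at e2
    rw [e1] at e2
    linarith
  · have e1 : ∫ t in a..b, (b - t) * m t = b - (∫ t in a..b, t * m t) := by
      have hfun : (fun t => (b - t) * m t) = (fun t => b * m t - t * m t) := by ext t; ring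
      rw [hfun, integral_sub (hint_m.const_mul b) hint_tm, intervalIntegral.integral_const_mul, hmass, mul_one]
    have e2 : ∫ t in a..b, c * (b - t) ≤ ∫ t in a..b, (b - t) * m t := by
      apply integral_mono_on hab.le
        ((continuous_const.mul (continuous_const.sub continuous_id)).intervalIntegrable _ _)
        (by
          have hfun : (fun t => (b - t) * m t) = (fun t => b * m t - t * m t) := by ext t; ring
          rw [hfun]; exact (hint_m.const_mul b).sub hint_tm)
      intro t ht
      have h1 : 0 ≤ b - t := sub_nonneg.2 ht.2
      calc c * (b - t) = (b - t) * c := by ring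
        _ ≤ (b - t) * m t := mul_le_mul_of_nonneg_left (hlb t) h1
    rw [intervalIntegral.integral_const_mul, hid'] at e2
    rw [e1] at e2
    linarith

lemma aux_cellint (m : ℝ → ℝ) (C ξ a b : ℝ) (hm : Measurable m) (h0 : ∀ t, 0 ≤ m t)
    (hub : ∀ t, m t ≤ C) (hab : a ≤ b) (haξ : a ≤ ξ) (hξb : ξ ≤ b)
    (hmass : ∫ t in a..b, m t = 1) (hxi : ∫ t in a..b, t * m t = ξ)
    (g : ℝ → ℝ)
    (hg : ∀ t ∈ Set.Ioc a b, g t = (∫ u in a..t, m u) - (if ξ ≤ t then 1 else 0)) :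
    IntervalIntegrable g volume a b ∧ ∫ t in a..b, g t = 0 := by
  have habs : ∀ t, |m t| ≤ C := fun t => by rw [abs_of_nonneg (h0 t)]; exact hub t
  have hint_m : ∀ u v : ℝ, IntervalIntegrable m volume u v := aux_intInt m C hm habs
  set Φ : ℝ → ℝ := fun t => ∫ u in a..t, m u with hΦdef
  have hΦmono : Monotone Φ := by
    intro t t' htt'
    have key : (∫ u in a..t, m u) + ∫ u in t..t', m u = ∫ u in a..t', m u :=
      integral_add_adjacent_intervals (hint_m a t) (hint_m t t')
    have h2 : 0 ≤ ∫ u in t..t', m u := intervalIntegral.integral_nonneg htt' (fun u _ => h0 u)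
    simp only [hΦdef]
    linarith
  set ind : ℝ → ℝ := fun t => if ξ ≤ t then 1 else 0 with hinddef
  have hindmono : Monotone ind := by
    intro t t' htt'
    simp only [hinddef]
    split_ifs with h1 h2
    · exact le_refl 1
    · exact absurd (h1.trans htt') h2
    · exact zero_le_one
    · exact le_refl 0
  set g₀ : ℝ → ℝ := fun t => Φ t - ind t with hg₀def
  have hint_g₀ : IntervalIntegrable g₀ volume a b :=
    hΦmono.intervalIntegrable.sub hindmono.intervalIntegrable
  have hgg : g =ᵐ[volume.restrict (Set.Ioc a b)] g₀ := by
    filter_upwards [ae_restrict_mem measurableSet_Ioc] with t ht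
    rw [hg t ht]
  have hiog : IntegrableOn g (Set.Ioc a b) volume := by
    have := (intervalIntegrable_iff_integrableOn_Ioc_of_le hab).1 hint_g₀
    exact this.congr hgg.symm
  have hint_g : IntervalIntegrable g volume a b :=
    (intervalIntegrable_iff_integrableOn_Ioc_of_le hab).2 hiog
  refine ⟨hint_g, ?_⟩
  have e0 : ∫ t in a..b, g t = ∫ t in a..b, g₀ t := by
    rw [intervalIntegral.integral_of_le hab, intervalIntegral.integral_of_le hab]
    exact integral_congr_ae hgg
  have e1 : ∫ t in a..b, Φ t = b - ξ := by
    rw [hΦdef, aux_fub m C hm h0 hub a b hab]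
    have hfun : (fun u => (b - u) * m u) = (fun u => b * m u - u * m u) := by ext u; ring
    rw [hfun, integral_sub ((hint_m a b).const_mul b) (aux_intInt_tm m C hm h0 hub a b),
      intervalIntegral.integral_const_mul, hmass, hxi, mul_one]
  have e2 : ∫ t in a..b, ind t = b - ξ := aux_step ξ a b haξ hξb
  rw [e0, hg₀def]
  rw [integral_sub hΦmono.intervalIntegrable hindmono.intervalIntegrable, e1, e2, sub_self]


lemma aux_count (x : ℤ → ℝ) (ξ : ℤ → ℝ) (hx0 : x 0 = 0) (hmono : StrictMono x)
    (hξmem : ∀ k : ℤ, x k < ξ k ∧ ξ k < x (k + 1))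
    (k : ℤ) (t : ℝ) (hxt : x k < t) (ht : t ≤ x (k + 1)) :
    (if 0 ≤ t then ((Set.ncard {j : ℤ | ξ j ∈ Set.Ioc 0 t} : ℝ))
      else -((Set.ncard {j : ℤ | ξ j ∈ Set.Ioc t 0} : ℝ)))
    = k + (if ξ k ≤ t then 1 else 0) := by
  have hxm : Monotone x := hmono.monotone
  have hcard : ∀ p q : ℤ, (Set.Ico p q).ncard = (q - p).toNat := fun p q => by
    rw [← Finset.coe_Ico, Set.ncard_coe_finset, Int.card_Ico]
  have hξx : ∀ j i : ℤ, j < i → ξ j < x i := fun j i h =>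
    lt_of_lt_of_le (hξmem j).2 (hxm (by omega))
  have hxξ : ∀ j i : ℤ, i ≤ j → x i < ξ j := fun j i h =>
    lt_of_le_of_lt (hxm h) (hξmem j).1
  have hcast : ∀ p q : ℤ, p ≤ q → ((Set.Ico p q).ncard : ℝ) = (q : ℝ) - p := fun p q h => by
    rw [hcard]
    have h1 : (((q - p).toNat : ℤ) : ℝ) = ((q - p : ℤ) : ℝ) := by
      exact_mod_cast congrArg (fun z : ℤ => (z : ℝ)) (Int.toNat_of_nonneg (by omega))
    push_cast at h1 ⊢
    linarith
  rcases lt_or_ge k 0 with hk | hk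
  · -- negative cell
    have hx10 : x (k + 1) ≤ 0 := by rw [← hx0]; exact hxm (by omega)
    have htle : t ≤ 0 := ht.trans hx10
    rcases eq_or_lt_of_le htle with h0t | h0t
    · -- t = 0
      have hx1 : x (k + 1) = 0 := le_antisymm hx10 (h0t ▸ ht)
      have hk1 : k = -1 := by
        have := hmono.injective (hx1.trans hx0.symm); omega
      subst hk1
      rw [h0t]
      have hempty : {j : ℤ | ξ j ∈ Set.Ioc (0:ℝ) 0} = ∅ := by
        ext j; simp [Set.mem_Ioc]
      have hξk : ξ (-1) ≤ (0:ℝ) := by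
        have := hξx (-1) 0 (by omega); rw [hx0] at this; linarith
      rw [if_pos le_rfl, hempty, if_pos hξk]
      simp
    · -- t < 0
      rw [if_neg (not_le.2 h0t)]
      rcases le_or_gt (ξ k) t with hξt | hξt
      · have hset : {j : ℤ | ξ j ∈ Set.Ioc t 0} = Set.Ico (k + 1) 0 := by
          ext j; simp only [Set.mem_setOf_eq, Set.mem_Ioc, Set.mem_Ico]
          constructor
          · rintro ⟨h1, h2⟩
            constructor
            · by_contra hcon; push_neg at hcon
              have hjk : j ≤ k := by omega
              rcases eq_or_lt_of_le hjk with h | h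
              · rw [h] at h1; linarith
              · have := (hξx j k h).trans hxt; linarith
            · by_contra hcon; push_neg at hcon
              have := hxξ j 0 hcon; rw [hx0] at this; linarith
          · rintro ⟨h1, h2⟩
            constructor
            · exact lt_of_le_of_lt (ht.trans (hxm h1)) (hξmem j).1
            · have := hξx j 0 h2; rw [hx0] at this; linarith
        rw [hset, hcast _ _ (by omega), if_pos hξt]
        push_cast; ring
      · have hset : {j : ℤ | ξ j ∈ Set.Ioc t 0} = Set.Ico k 0 := by
          ext j; simp only [Set.mem_setOf_eq, Set.mem_Ioc, Set.mem_Ico]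
          constructor
          · rintro ⟨h1, h2⟩
            constructor
            · by_contra hcon; push_neg at hcon
              have := (hξx j k hcon).trans hxt; linarith
            · by_contra hcon; push_neg at hcon
              have := hxξ j 0 hcon; rw [hx0] at this; linarith
          · rintro ⟨h1, h2⟩
            refine ⟨?_, by have := hξx j 0 h2; rw [hx0] at this; linarith⟩
            rcases eq_or_lt_of_le h1 with h | h
            · rw [← h]; exact hξt
            · exact lt_of_le_of_lt (ht.trans (hxm (by omega))) (hξmem j).1
        rw [hset, hcast _ _ (by omega), if_neg (not_le.2 hξt)]
        push_cast; ring
  · -- nonnegative cell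
    have h0t : (0:ℝ) < t := by
      have : x 0 ≤ x k := hxm hk
      rw [hx0] at this; linarith
    rw [if_pos h0t.le]
    rcases le_or_gt (ξ k) t with hξt | hξt
    · have hset : {j : ℤ | ξ j ∈ Set.Ioc 0 t} = Set.Ico 0 (k + 1) := by
        ext j; simp only [Set.mem_setOf_eq, Set.mem_Ioc, Set.mem_Ico]
        constructor
        · rintro ⟨h1, h2⟩
          constructor
          · by_contra hcon; push_neg at hcon
            have := hξx j 0 (by omega); rw [hx0] at this; linarith
          · by_contra hcon; push_neg at hcon
            have := lt_of_le_of_lt (ht.trans (hxm (by omega))) (hξmem j).1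
            linarith
        · rintro ⟨h1, h2⟩
          have hjk : j ≤ k := by omega
          refine ⟨by have := hxξ j 0 h1; rw [hx0] at this; linarith, ?_⟩
          rcases eq_or_lt_of_le hjk with h | h
          · rw [h]; exact hξt
          · exact ((hξx j k h).trans hxt).le.trans (le_refl t)
      rw [hset, hcast _ _ (by omega), if_pos hξt]
      push_cast; ring
    · have hset : {j : ℤ | ξ j ∈ Set.Ioc 0 t} = Set.Ico 0 k := by
        ext j; simp only [Set.mem_setOf_eq, Set.mem_Ioc, Set.mem_Ico]
        constructor
        · rintro ⟨h1, h2⟩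
          constructor
          · by_contra hcon; push_neg at hcon
            have := hξx j 0 (by omega); rw [hx0] at this; linarith
          · by_contra hcon; push_neg at hcon
            rcases eq_or_lt_of_le hcon with h | h
            · rw [h] at hξt; linarith
            · have := lt_of_le_of_lt (ht.trans (hxm (by omega))) (hξmem j).1
              linarith
        · rintro ⟨h1, h2⟩
          refine ⟨by have := hxξ j 0 h1; rw [hx0] at this; linarith, ?_⟩
          exact ((hξx j k h2).trans hxt).le
      rw [hset, hcast _ _ (by omega), if_neg (not_le.2 hξt)]
      push_cast; ring


theorem stmt7 (m : ℝ → ℝ) (c C : ℝ) (hc : 0 < c) (hm : Measurable m)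
    (hlb : ∀ t, c ≤ m t) (hub : ∀ t, m t ≤ C)
    (x : ℤ → ℝ) (hx0 : x 0 = 0) (hmono : StrictMono x)
    (hcell : ∀ k : ℤ, ∫ t in x k..x (k + 1), m t = 1)
    (ξ : ℤ → ℝ) (hξ : ∀ k : ℤ, ξ k = ∫ t in x k..x (k + 1), t * m t)
    (fμ Fμ : ℝ → ℝ)
    (hf : ∀ s : ℝ, fμ s = (∫ t in (0 : ℝ)..s, m t) -
      (if 0 ≤ s then ((Set.ncard {k : ℤ | ξ k ∈ Set.Ioc 0 s} : ℝ))
        else -((Set.ncard {k : ℤ | ξ k ∈ Set.Ioc s 0} : ℝ))))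
    (hF : ∀ s : ℝ, Fμ s = ∫ t in (0 : ℝ)..s, fμ t) :
    (∀ k : ℤ, fμ (x k) = 0 ∧ Fμ (x k) = 0) ∧
      ∃ B : ℝ, ∀ s : ℝ, |fμ s| ≤ B ∧ |Fμ s| ≤ B := by
  classical
  have hC : 0 < C := hc.trans_le ((hlb 0).trans (hub 0))
  have h0 : ∀ t, 0 ≤ m t := fun t => hc.le.trans (hlb t)
  have habs : ∀ t, |m t| ≤ C := fun t => by rw [abs_of_nonneg (h0 t)]; exact hub t
  have hint_m : ∀ u v : ℝ, IntervalIntegrable m volume u v := aux_intInt m C hm habs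
  have hxm : Monotone x := hmono.monotone
  have hxlt : ∀ k : ℤ, x k < x (k + 1) := fun k => hmono (by omega)
  have hξmem : ∀ k : ℤ, x k < ξ k ∧ ξ k < x (k + 1) := fun k => by
    rw [hξ k]; exact aux_ximem m c C hc hm hlb hub _ _ (hxlt k) (hcell k)
  -- integral of m from 0 to x n equals n
  have hGm : ∀ n : ℤ, ∫ t in (0:ℝ)..(x n), m t = n := by
    have hstep : ∀ n : ℤ, ∫ t in (0:ℝ)..(x (n + 1)), m t = (∫ t in (0:ℝ)..(x n), m t) + 1 := by
      intro n
      rw [← hcell n, integral_add_adjacent_intervals (hint_m 0 (x n)) (hint_m (x n) (x (n + 1)))]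
    intro n
    induction n using Int.induction_on with
    | zero => rw [hx0]; simp
    | succ n ih => rw [hstep n, ih]; push_cast; ring
    | pred n ih =>
        have h1 := hstep (-(n:ℤ) - 1)
        rw [show (-(n:ℤ) - 1) + 1 = -(n:ℤ) by ring, ih] at h1
        push_cast at h1 ⊢
        linarith
  -- split of the integral at x k
  have hsplit : ∀ (k : ℤ) (t : ℝ), ∫ u in (0:ℝ)..t, m u = k + ∫ u in (x k)..t, m u := by
    intro k t
    have h1 := integral_add_adjacent_intervals (hint_m 0 (x k)) (hint_m (x k) t)
    rw [hGm k] at h1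
    exact h1.symm
  -- fμ formula on cells
  have hfcell : ∀ (k : ℤ) (t : ℝ), x k < t → t ≤ x (k + 1) →
      fμ t = (∫ u in (x k)..t, m u) - (if ξ k ≤ t then 1 else 0) := by
    intro k t h1 h2
    rw [hf t, aux_count x ξ hx0 hmono hξmem k t h1 h2, hsplit k t]
    ring
  -- fμ vanishes at the nodes
  have hfx : ∀ n : ℤ, fμ (x n) = 0 := by
    intro n
    have h1 : x (n - 1) < x n := hmono (by omega)
    have h2 : x n ≤ x ((n - 1) + 1) := by rw [show n - 1 + 1 = n by ring]
    rw [hfcell (n - 1) (x n) h1 h2]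
    have hξle : ξ (n - 1) ≤ x n := by
      have h3 := (hξmem (n - 1)).2
      rw [show n - 1 + 1 = n by ring] at h3
      linarith
    have hm1 : ∫ u in (x (n - 1))..(x n), m u = 1 := by
      have h4 := hcell (n - 1)
      rw [show n - 1 + 1 = n by ring] at h4
      exact h4
    rw [if_pos hξle, hm1]
    ring
  -- cell integrals of fμ
  have hFcell : ∀ k : ℤ, IntervalIntegrable fμ volume (x k) (x (k + 1)) ∧
      ∫ t in (x k)..(x (k + 1)), fμ t = 0 := fun k =>
    aux_cellint m C (ξ k) (x k) (x (k + 1)) hm h0 hub (hxlt k).le (hξmem k).1.le (hξmem k).2.le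
      (hcell k) (hξ k).symm fμ (fun t ht => hfcell k t ht.1 ht.2)
  -- integral of fμ from 0 to x n is 0
  have hFx : ∀ n : ℤ, IntervalIntegrable fμ volume 0 (x n) ∧
      ∫ t in (0:ℝ)..(x n), fμ t = 0 := by
    intro n
    induction n using Int.induction_on with
    | zero => rw [hx0]; exact ⟨IntervalIntegrable.refl, integral_same⟩
    | succ n ih =>
        exact ⟨ih.1.trans (hFcell n).1, by
          rw [← integral_add_adjacent_intervals ih.1 (hFcell n).1, ih.2, (hFcell n).2, add_zero]⟩
    | pred n ih =>
        have hc1 := hFcell (-(n:ℤ) - 1)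
        rw [show (-(n:ℤ) - 1) + 1 = -(n:ℤ) by ring] at hc1
        have hint2 : IntervalIntegrable fμ volume (x (-(n:ℤ))) (x (-(n:ℤ) - 1)) := hc1.1.symm
        refine ⟨ih.1.trans hint2, ?_⟩
        have h1 := integral_add_adjacent_intervals ih.1 hint2
        rw [ih.2, zero_add] at h1
        rw [← h1, integral_symm, hc1.2, neg_zero]
  have hFμx : ∀ n : ℤ, Fμ (x n) = 0 := fun n => by rw [hF (x n)]; exact (hFx n).2
  -- growth estimates
  have hgrow : ∀ n : ℤ, 0 ≤ n → (n:ℝ) ≤ C * x n := by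
    intro n hn
    have hxn : 0 ≤ x n := by rw [← hx0]; exact hxm hn
    have h1 : ∫ t in (0:ℝ)..(x n), m t ≤ ∫ t in (0:ℝ)..(x n), C :=
      integral_mono_on hxn (hint_m 0 (x n)) intervalIntegrable_const (fun t _ => hub t)
    rw [hGm, intervalIntegral.integral_const, smul_eq_mul, sub_zero] at h1
    nlinarith [h1]
  have hgrow2 : ∀ n : ℤ, n ≤ 0 → C * x n ≤ n := by
    intro n hn
    have hxn : x n ≤ 0 := by rw [← hx0]; exact hxm hn
    have h1 : ∫ t in (x n)..(0:ℝ), m t ≤ ∫ t in (x n)..(0:ℝ), C :=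
      integral_mono_on hxn (hint_m _ _) intervalIntegrable_const (fun t _ => hub t)
    have h2 : ∫ t in (x n)..(0:ℝ), m t = -(n:ℝ) := by
      rw [integral_symm, hGm]
    rw [h2, intervalIntegral.integral_const, smul_eq_mul] at h1
    nlinarith [h1]
  -- every point lies in some half-open cell (x k, x (k+1)]
  have hcellex : ∀ s : ℝ, ∃ k : ℤ, x k < s ∧ s ≤ x (k + 1) := by
    intro s
    have hex : ∃ n : ℤ, s ≤ x n := by
      refine ⟨max ⌈C * s⌉ 1, ?_⟩
      have h1 : C * s ≤ ((max ⌈C * s⌉ 1 : ℤ) : ℝ) := by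
        calc C * s ≤ (⌈C * s⌉ : ℝ) := Int.le_ceil _
          _ ≤ ((max ⌈C * s⌉ 1 : ℤ) : ℝ) := by exact_mod_cast le_max_left _ _
      have h2 := hgrow (max ⌈C * s⌉ 1) (by omega)
      exact le_of_mul_le_mul_left (h1.trans h2) hC
    have hbdd : ∃ b : ℤ, ∀ z : ℤ, s ≤ x z → b ≤ z := by
      refine ⟨min ⌊C * s⌋ 0, fun z hz => ?_⟩
      rcases le_or_gt 0 z with h | h
      · exact le_trans (min_le_right _ _) h
      · have h1 := hgrow2 z h.le
        have h2 : C * s ≤ C * x z := mul_le_mul_of_nonneg_left hz hC.le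
        have h3 : (⌊C * s⌋ : ℝ) ≤ (z : ℝ) := le_trans (Int.floor_le _) (by linarith)
        have h4 : ⌊C * s⌋ ≤ z := by exact_mod_cast h3
        exact le_trans (min_le_left _ _) h4
    obtain ⟨n₀, hn₀, hleast⟩ := Int.exists_least_of_bdd hbdd hex
    refine ⟨n₀ - 1, ?_, ?_⟩
    · by_contra h
      push_neg at h
      have := hleast _ h
      omega
    · rw [show n₀ - 1 + 1 = n₀ by ring]; exact hn₀
  -- cell length bound
  have hlen : ∀ k : ℤ, x (k + 1) - x k ≤ 1 / c := by
    intro k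
    have h1 : ∫ t in (x k)..(x (k + 1)), c ≤ ∫ t in (x k)..(x (k + 1)), m t :=
      integral_mono_on (hxlt k).le intervalIntegrable_const (hint_m _ _) (fun t _ => hlb t)
    rw [hcell k, intervalIntegral.integral_const, smul_eq_mul] at h1
    rw [le_div_iff₀ hc]
    linarith
  -- global bound on fμ
  have hfb : ∀ s : ℝ, |fμ s| ≤ 1 := by
    intro s
    obtain ⟨k, h1, h2⟩ := hcellex s
    rw [hfcell k s h1 h2, abs_le]
    have hi1 : 0 ≤ ∫ u in (x k)..s, m u :=
      intervalIntegral.integral_nonneg h1.le (fun u _ => h0 u)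
    have hi2 : (∫ u in (x k)..s, m u) ≤ 1 := by
      have h3 := integral_add_adjacent_intervals (hint_m (x k) s) (hint_m s (x (k + 1)))
      rw [hcell k] at h3
      have h4 : 0 ≤ ∫ u in s..(x (k + 1)), m u :=
        intervalIntegral.integral_nonneg h2 (fun u _ => h0 u)
      linarith
    split_ifs <;> constructor <;> linarith
  refine ⟨fun k => ⟨hfx k, hFμx k⟩, max 1 (1 / c), fun s =>
    ⟨(hfb s).trans (le_max_left _ _), ?_⟩⟩
  obtain ⟨k, h1, h2⟩ := hcellex s
  have hsub : Set.uIcc (x k) s ⊆ Set.uIcc (x k) (x (k + 1)) :=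
    Set.uIcc_subset_uIcc Set.left_mem_uIcc
      (by rw [Set.uIcc_of_le (hxlt k).le]; exact ⟨h1.le, h2⟩)
  have hint_s : IntervalIntegrable fμ volume (x k) s := (hFcell k).1.mono_set hsub
  have hsum := integral_add_adjacent_intervals (hFx k).1 hint_s
  rw [(hFx k).2, zero_add] at hsum
  rw [hF s, ← hsum]
  have hb := intervalIntegral.norm_integral_le_of_norm_le_const (C := 1)
    (f := fμ) (a := x k) (b := s) (fun t _ => by rw [Real.norm_eq_abs]; exact hfb t)
  rw [Real.norm_eq_abs] at hb
  have habs2 : |s - x k| = s - x k := abs_of_nonneg (by linarith)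
  calc |∫ t in (x k)..s, fμ t| ≤ 1 * |s - x k| := hb
    _ ≤ 1 / c := by rw [habs2, one_mul]; linarith [hlen k]
    _ ≤ max 1 (1 / c) := le_max_right _ _
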